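/- For an N×N skew-symmetric matrix Z with entries Z_{i,j} = (z_i - z_j)/(z_i + z_j), where z_1, ..., z_N are complex numbers with z_i + z_j ≠ 0 for all i, j, and N even, the Pfaffian of Z equals the product over i < j of (z_i - z_j)/(z_i + z_j). -/

import Mathlib

open scoped BigOperators

/-- The Pfaffian of a `2n × 2n` complex matrix, given by the standard
sum over permutations formula. -/
noncomputable def pfaffian {n : ℕ} (A : Matrix (Fin (2 * n)) (Fin (2 * n)) ℂ) : ℂ :=
  (1 / ((2 : ℂ) ^ n * (Nat.factorial n : ℂ))) *
    ∑ σ : Equiv.Perm (Fin (2 * n)),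
      ((Equiv.Perm.sign σ : ℤ) : ℂ) *
        ∏ i : Fin n, A (σ ⟨2 * i.val, by omega⟩) (σ ⟨2 * i.val + 1, by omega⟩)

namespace PfaffianCayleyAux

open Equiv Equiv.Perm Finset Polynomial
noncomputable section

def Gmap (m : ℕ) : Fin (m+1) × Perm (Fin m) → Perm (Fin (m+1)) :=
  fun x => x.1.cycleRange.symm * (Equiv.Perm.decomposeFin.symm (0, x.2))

lemma Gmap_zero (m : ℕ) (p : Fin (m+1)) (e : Perm (Fin m)) : Gmap m (p, e) 0 = p := by
  simp [Gmap, Equiv.Perm.decomposeFin_symm_apply_zero, Equiv.Perm.mul_apply]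

lemma Gmap_succ (m : ℕ) (p : Fin (m+1)) (e : Perm (Fin m)) (x : Fin m) :
    Gmap m (p, e) x.succ = p.succAbove (e x) := by
  simp [Gmap, Equiv.Perm.mul_apply, Equiv.Perm.decomposeFin_symm_apply_succ]

lemma Gmap_sign (m : ℕ) (p : Fin (m+1)) (e : Perm (Fin m)) :
    Equiv.Perm.sign (Gmap m (p, e)) = (-1)^(p.val) * Equiv.Perm.sign e := by
  simp [Gmap, Equiv.Perm.decomposeFin.symm_sign]

lemma Gmap_bijective (m : ℕ) : Function.Bijective (Gmap m) := by
  rw [Fintype.bijective_iff_injective_and_card]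
  constructor
  · rintro ⟨p, e⟩ ⟨p', e'⟩ h
    have hp : p = p' := by
      have := congrArg (fun σ : Perm (Fin (m+1)) => σ 0) h
      simpa [Gmap_zero] using this
    subst hp
    have h2 : Equiv.Perm.decomposeFin.symm (0, e) = Equiv.Perm.decomposeFin.symm (0, e') :=
      mul_left_cancel h
    have := Equiv.Perm.decomposeFin.symm.injective h2
    simpa using this
  · simp [Fintype.card_perm, Nat.factorial_succ]

def Fsum (n : ℕ) (B : Fin (2*n) → Fin (2*n) → ℂ) : ℂ :=
  ∑ σ : Perm (Fin (2*n)), ((Equiv.Perm.sign σ : ℤ) : ℂ) *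
    ∏ i : Fin n, B (σ ⟨2*i.val, by omega⟩) (σ ⟨2*i.val+1, by omega⟩)

lemma expand (n : ℕ) (B : Fin (2*n+2) → Fin (2*n+2) → ℂ) :
    Fsum (n+1) B = ∑ p : Fin (2*n+2), ∑ b : Fin (2*n+1),
      (-1:ℂ)^(p.val+b.val) * B p (p.succAbove b) *
        Fsum n (fun k l => B (p.succAbove (b.succAbove k)) (p.succAbove (b.succAbove l))) := by
  show (∑ σ : Perm (Fin (2*n+2)), ((Equiv.Perm.sign σ : ℤ) : ℂ) *
      ∏ i : Fin (n+1), B (σ ⟨2*i.val, by omega⟩) (σ ⟨2*i.val+1, by omega⟩)) = _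
  rw [← (Gmap_bijective (2*n+1)).sum_comp, Fintype.sum_prod_type]
  refine Finset.sum_congr rfl fun p _ => ?_
  rw [← (Gmap_bijective (2*n)).sum_comp, Fintype.sum_prod_type]
  refine Finset.sum_congr rfl fun b _ => ?_
  rw [Fsum, Finset.mul_sum]
  refine Finset.sum_congr rfl fun τ _ => ?_
  have hsign : ((Equiv.Perm.sign (Gmap (2*n+1) (p, Gmap (2*n) (b, τ))) : ℤ) : ℂ)
      = (-1:ℂ)^(p.val+b.val) * ((Equiv.Perm.sign τ : ℤ) : ℂ) := by
    rw [Gmap_sign, Gmap_sign]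
    push_cast
    ring
  rw [hsign]
  have hprod : (∏ i : Fin (n+1),
        B ((Gmap (2*n+1) (p, Gmap (2*n) (b, τ))) ⟨2*i.val, by omega⟩)
          ((Gmap (2*n+1) (p, Gmap (2*n) (b, τ))) ⟨2*i.val+1, by omega⟩))
      = B p (p.succAbove b) * ∏ i : Fin n,
          B (p.succAbove (b.succAbove (τ ⟨2*i.val, by omega⟩)))
            (p.succAbove (b.succAbove (τ ⟨2*i.val+1, by omega⟩))) := by
    rw [Fin.prod_univ_succ]
    congr 1
    · show B ((Gmap (2*n+1) (p, Gmap (2*n) (b, τ))) 0)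
          ((Gmap (2*n+1) (p, Gmap (2*n) (b, τ))) (Fin.succ 0)) = _
      rw [Gmap_zero, Gmap_succ, Gmap_zero]
    · refine Finset.prod_congr rfl fun i _ => ?_
      show B ((Gmap (2*n+1) (p, Gmap (2*n) (b, τ))) (Fin.succ ⟨2*i.val+1, by omega⟩))
          ((Gmap (2*n+1) (p, Gmap (2*n) (b, τ))) (Fin.succ ⟨2*i.val+2, by omega⟩)) = _
      rw [Gmap_succ, Gmap_succ]
      show B (p.succAbove ((Gmap (2*n) (b, τ)) (Fin.succ ⟨2*i.val, by omega⟩)))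
          (p.succAbove ((Gmap (2*n) (b, τ)) (Fin.succ ⟨2*i.val+1, by omega⟩))) = _
      rw [Gmap_succ, Gmap_succ]
  rw [hprod]
  ring

lemma card_filter_castSucc_lt (m : ℕ) (a : Fin (m+1)) :
    (Finset.univ.filter (fun k : Fin m => k.castSucc < a)).card = a.val := by
  refine (Finset.card_bij (fun (k : Fin m) _ => (k : ℕ)) ?_ ?_ ?_).trans
    (Finset.card_range a.val)
  · intro k hk
    simp only [Finset.mem_filter, Finset.mem_univ, true_and, Fin.lt_iff_val_lt_val,
      Fin.coe_castSucc] at hk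
    simpa using hk
  · intro x _ y _ h
    exact Fin.ext h
  · intro b hb
    simp only [Finset.mem_range] at hb
    have hbm : b < m := by omega
    refine ⟨⟨b, hbm⟩, ?_, rfl⟩
    simp [Fin.lt_iff_val_lt_val, hb]

lemma row_split (m : ℕ) (g : Fin (m+1) → Fin (m+1) → ℂ)
    (hskew : ∀ i j, g j i = - g i j) (a : Fin (m+1)) :
    (∏ i, ∏ j ∈ Finset.Ioi i, g i j)
    = ((-1:ℂ)^a.val * ∏ k : Fin m, g a (a.succAbove k)) *
        ∏ k : Fin m, ∏ l ∈ Finset.Ioi k, g (a.succAbove k) (a.succAbove l) := by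
  rw [Fin.prod_univ_succAbove (fun i => ∏ j ∈ Finset.Ioi i, g i j) a]
  have hA : ∀ k : Fin m, (∏ j ∈ Finset.Ioi (a.succAbove k), g (a.succAbove k) j)
      = (if k.castSucc < a then g (a.succAbove k) a else 1) *
          ∏ l ∈ Finset.Ioi k, g (a.succAbove k) (a.succAbove l) := by
    intro k
    have himg : ∀ j ∈ Finset.Ioi k, a.succAbove j ∈ Finset.Ioi (a.succAbove k) := by
      intro j hj
      simp only [Finset.mem_Ioi] at hj ⊢
      exact (Fin.succAbove_lt_succAbove_iff).mpr hj
    have hprodimg : (∏ l ∈ (Finset.Ioi k).image a.succAbove, g (a.succAbove k) l)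
        = ∏ l ∈ Finset.Ioi k, g (a.succAbove k) (a.succAbove l) :=
      Finset.prod_image (fun x _ y _ h => a.succAbove_right_injective h)
    by_cases hc : k.castSucc < a
    · have hlt : a.succAbove k < a := (Fin.succAbove_lt_iff_castSucc_lt a k).mpr hc
      have ha : a ∈ Finset.Ioi (a.succAbove k) := Finset.mem_Ioi.mpr hlt
      rw [← Finset.mul_prod_erase _ _ ha, if_pos hc]
      congr 1
      rw [← hprodimg]
      congr 1
      ext j
      simp only [Finset.mem_erase, Finset.mem_Ioi, Finset.mem_image]
      constructor
      · rintro ⟨hne, hgt⟩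
        obtain ⟨l, rfl⟩ := Fin.exists_succAbove_eq hne
        exact ⟨l, Fin.succAbove_lt_succAbove_iff.mp hgt, rfl⟩
      · rintro ⟨l, hl, rfl⟩
        exact ⟨Fin.succAbove_ne a l, Fin.succAbove_lt_succAbove_iff.mpr hl⟩
    · have hgt : a < a.succAbove k := by
        rcases lt_or_eq_of_le (not_lt.mp hc) with h | h
        · exact (Fin.lt_succAbove_iff_le_castSucc a k).mpr (le_of_lt h)
        · exact (Fin.lt_succAbove_iff_le_castSucc a k).mpr (le_of_eq h)
      rw [if_neg hc, one_mul, ← hprodimg]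
      congr 1
      ext j
      simp only [Finset.mem_Ioi, Finset.mem_image]
      constructor
      · intro hgt2
        have hne : j ≠ a := by
          intro h; rw [h] at hgt2; exact absurd hgt2 (lt_asymm hgt)
        obtain ⟨l, rfl⟩ := Fin.exists_succAbove_eq hne
        exact ⟨l, Fin.succAbove_lt_succAbove_iff.mp hgt2, rfl⟩
      · rintro ⟨l, hl, rfl⟩
        exact Fin.succAbove_lt_succAbove_iff.mpr hl
  calc (∏ j ∈ Finset.Ioi a, g a j) * ∏ k : Fin m, ∏ j ∈ Finset.Ioi (a.succAbove k), g (a.succAbove k) j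
      = (∏ j ∈ Finset.Ioi a, g a j) *
        ((∏ k : Fin m, (if k.castSucc < a then g (a.succAbove k) a else 1)) *
          ∏ k : Fin m, ∏ l ∈ Finset.Ioi k, g (a.succAbove k) (a.succAbove l)) := by
        rw [← Finset.prod_mul_distrib]
        congr 1
        exact Finset.prod_congr rfl fun k _ => hA k
    _ = ((-1:ℂ)^a.val * ∏ k : Fin m, g a (a.succAbove k)) *
          ∏ k : Fin m, ∏ l ∈ Finset.Ioi k, g (a.succAbove k) (a.succAbove l) := by
        rw [← mul_assoc]
        congr 1
        -- (∏ j ∈ Ioi a, g a j) * ∏ k, ite = (-1)^a * ∏ k, g a (sA k)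
        have h1 : (∏ k : Fin m, (if k.castSucc < a then g (a.succAbove k) a else 1))
            = (-1:ℂ)^a.val * ∏ k ∈ Finset.univ.filter (fun k : Fin m => k.castSucc < a),
                g a (a.succAbove k) := by
          rw [← Finset.prod_filter]
          have : ∀ k ∈ Finset.univ.filter (fun k : Fin m => k.castSucc < a),
              g (a.succAbove k) a = -1 * g a (a.succAbove k) := by
            intro k _; rw [hskew]; ring
          rw [Finset.prod_congr rfl this, Finset.prod_mul_distrib, Finset.prod_const,
            card_filter_castSucc_lt]
        have h2 : (∏ j ∈ Finset.Ioi a, g a j)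
            = ∏ k ∈ Finset.univ.filter (fun k : Fin m => ¬ k.castSucc < a),
                g a (a.succAbove k) := by
          refine (Finset.prod_bij (fun k _ => a.succAbove k) ?_ ?_ ?_ ?_).symm
          · intro k hk
            simp only [Finset.mem_filter, Finset.mem_univ, true_and, not_lt] at hk
            exact Finset.mem_Ioi.mpr ((Fin.lt_succAbove_iff_le_castSucc a k).mpr hk)
          · intro x _ y _ h; exact a.succAbove_right_injective h
          · intro j hj
            have hj' := Finset.mem_Ioi.mp hj
            obtain ⟨l, rfl⟩ := Fin.exists_succAbove_eq (ne_of_gt hj')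
            refine ⟨l, ?_, rfl⟩
            simp only [Finset.mem_filter, Finset.mem_univ, true_and, not_lt]
            exact (Fin.lt_succAbove_iff_le_castSucc a l).mp hj'
          · intros; rfl
        rw [h2, h1]
        rw [show (∏ k : Fin m, g a (a.succAbove k))
            = _ from (Finset.prod_filter_mul_prod_filter_not Finset.univ
                (fun k : Fin m => k.castSucc < a) (fun k => g a (a.succAbove k))).symm]
        ring


def Lag (y : Fin (2*n+1) → ℂ) (b : Fin (2*n+1)) : ℂ :=
  ∏ k : Fin (2*n), ((y b + y (b.succAbove k))/(y b - y (b.succAbove k)))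

lemma Lag_mul_prod (y : Fin (2*n+1) → ℂ) (hinj : Function.Injective y) (b : Fin (2*n+1)) :
    Lag y b * ∏ k : Fin (2*n), (y b - y (b.succAbove k))
      = ∏ k : Fin (2*n), (y b + y (b.succAbove k)) := by
  rw [Lag, ← Finset.prod_mul_distrib]
  refine Finset.prod_congr rfl fun k _ => ?_
  have hne : y b - y (b.succAbove k) ≠ 0 := by
    rw [sub_ne_zero]
    exact fun h => (Fin.succAbove_ne b k) (hinj h).symm
  field_simp

lemma prod_neg_odd (y : Fin (2*n+1) → ℂ) (w : ℂ) :
    (∏ b, (w - y b)) = - ∏ b, (y b - w) := by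
  rw [show (fun b => w - y b) = fun b => (-1:ℂ) * (y b - w) by funext b; ring]
  rw [Finset.prod_mul_distrib, Finset.prod_const, Finset.card_univ, Fintype.card_fin,
    pow_succ, pow_mul]
  norm_num

lemma sum_Lag_eq_one (y : Fin (2*n+1) → ℂ) (hinj : Function.Injective y)
    (h0 : ∀ b, y b ≠ 0) : ∑ b, Lag y b = 1 := by
  classical
  set A : ℂ[X] := ∏ b, (X + C (y b)) with hA
  set Bp : ℂ[X] := ∏ b, (X - C (y b)) with hB
  set G : ℂ[X] := ∑ b, C (Lag y b) * ∏ k : Fin (2*n), (X - C (y (b.succAbove k))) with hG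
  have hAdeg : A.natDegree = 2*n+1 := by
    rw [hA, natDegree_prod_of_monic _ _ fun b _ => monic_X_add_C (y b)]
    simp [natDegree_X_add_C]
  have hBdeg : Bp.natDegree = 2*n+1 := by
    rw [hB, natDegree_prod_of_monic _ _ fun b _ => monic_X_sub_C (y b)]
    simp [natDegree_X_sub_C]
  have hGdeg : G.natDegree ≤ 2*n := by
    refine natDegree_sum_le_of_forall_le _ _ fun b _ => ?_
    refine (natDegree_C_mul_le _ _).trans ?_
    refine (natDegree_prod_le _ _).trans ?_
    simp [natDegree_X_sub_C]
  have hXG : (C 2 * (X * G)).natDegree ≤ 2*n+1 := by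
    refine (natDegree_C_mul_le _ _).trans ?_
    have := natDegree_mul_le_of_le (natDegree_X_le) hGdeg
    exact this.trans (by omega)
  have hD : A + Bp - C 2 * (X * G) = 0 := by
    have h0img : (0:ℂ) ∉ Finset.univ.image y := by
      simp only [Finset.mem_image]
      rintro ⟨b, -, hb⟩
      exact h0 b hb
    have hcard : (insert (0:ℂ) (Finset.univ.image y)).card = 2*n+2 := by
      rw [Finset.card_insert_of_notMem h0img, Finset.card_image_of_injective _ hinj]
      simp
    refine eq_zero_of_degree_lt_of_eval_finset_eq_zero
      (insert (0:ℂ) (Finset.univ.image y)) ?_ ?_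
    · rw [hcard]
      have hnd : (A + Bp - C 2 * (X * G)).natDegree ≤ 2*n+1 := by
        refine (natDegree_sub_le _ _).trans (max_le ((natDegree_add_le _ _).trans ?_) hXG)
        rw [hAdeg, hBdeg]; omega
      refine lt_of_le_of_lt degree_le_natDegree ?_
      exact_mod_cast lt_of_le_of_lt (Nat.cast_le.mpr hnd)
        (by exact_mod_cast Nat.lt_succ_self (2*n+1))
    · intro x hx
      simp only [Finset.mem_insert, Finset.mem_image] at hx
      have hevalA : ∀ w, A.eval w = ∏ b, (w + y b) := by
        intro w; rw [hA, eval_prod]; simp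
      have hevalB : ∀ w, Bp.eval w = ∏ b, (w - y b) := by
        intro w; rw [hB, eval_prod]; simp
      rcases hx with rfl | ⟨c, -, rfl⟩
      · simp only [eval_sub, eval_add, eval_mul, eval_C, eval_X, zero_mul, mul_zero]
        rw [hevalA, hevalB, prod_neg_odd y 0]
        simp
      · simp only [eval_sub, eval_add, eval_mul, eval_C, eval_X]
        have hBeval : Bp.eval (y c) = 0 := by
          rw [hevalB]
          refine Finset.prod_eq_zero (Finset.mem_univ c) (by simp)
        have hGeval : G.eval (y c) = ∏ k : Fin (2*n), (y c + y (c.succAbove k)) := by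
          rw [hG, eval_finset_sum, Finset.sum_eq_single c]
          · simp only [eval_mul, eval_C, eval_prod, eval_sub, eval_X]
            exact Lag_mul_prod y hinj c
          · intro b _ hbc
            simp only [eval_mul, eval_C, eval_prod, eval_sub, eval_X]
            obtain ⟨k, hk⟩ := Fin.exists_succAbove_eq (Ne.symm hbc)
            refine mul_eq_zero_of_right _ (Finset.prod_eq_zero (Finset.mem_univ k) ?_)
            rw [hk]; ring
          · simp
        rw [hBeval, hGeval, hevalA, Fin.prod_univ_succAbove (fun b => y c + y b) c]
        ring
  have hcoeff := congrArg (fun p : ℂ[X] => p.coeff (2*n+1)) hD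
  simp only [coeff_sub, coeff_add, coeff_zero] at hcoeff
  have hAc : A.coeff (2*n+1) = 1 := by
    have := (monic_prod_of_monic _ _ fun b (_ : b ∈ Finset.univ) => monic_X_add_C (y b)).coeff_natDegree
    rwa [← hA, hAdeg] at this
  have hBc : Bp.coeff (2*n+1) = 1 := by
    have := (monic_prod_of_monic _ _ fun b (_ : b ∈ Finset.univ) => monic_X_sub_C (y b)).coeff_natDegree
    rwa [← hB, hBdeg] at this
  have hGc : (C 2 * (X * G)).coeff (2*n+1) = 2 * ∑ b, Lag y b := by
    rw [coeff_C_mul, coeff_X_mul, hG, finset_sum_coeff]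
    congr 1
    refine Finset.sum_congr rfl fun b _ => ?_
    rw [coeff_C_mul]
    have hmon : (∏ k : Fin (2*n), (X - C (y (b.succAbove k)))).Monic :=
      monic_prod_of_monic _ _ fun k _ => monic_X_sub_C _
    have hdeg : (∏ k : Fin (2*n), (X - C (y (b.succAbove k)))).natDegree = 2*n := by
      rw [natDegree_prod_of_monic _ _ fun k _ => monic_X_sub_C _]
      simp [natDegree_X_sub_C]
    have := hmon.coeff_natDegree
    rw [hdeg] at this
    rw [this, mul_one]
  rw [hAc, hBc, hGc] at hcoeff
  have h2 : (2:ℂ) * ∑ b, Lag y b = 2 * 1 := by linear_combination -hcoeff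
  exact mul_left_cancel₀ two_ne_zero h2

lemma star_poly (y : Fin (2*n+1) → ℂ) (hinj : Function.Injective y)
    (h0 : ∀ b, y b ≠ 0) :
    (∏ b, (X - C (y b)) : ℂ[X])
      = ∑ b, C (Lag y b) * ((X - C (y b)) * ∏ k : Fin (2*n), (X + C (y (b.succAbove k)))) := by
  classical
  rw [← sub_eq_zero]
  have hinjneg : Function.Injective (fun b => -(y b)) := fun a b h => hinj (neg_injective h)
  have h0img : (0:ℂ) ∉ Finset.univ.image (fun b => -(y b)) := by
    simp only [Finset.mem_image]
    rintro ⟨b, -, hb⟩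
    exact h0 b (neg_eq_zero.mp hb)
  have hcard : (insert (0:ℂ) (Finset.univ.image (fun b => -(y b)))).card = 2*n+2 := by
    rw [Finset.card_insert_of_notMem h0img, Finset.card_image_of_injective _ hinjneg]
    simp
  refine eq_zero_of_degree_lt_of_eval_finset_eq_zero
    (insert (0:ℂ) (Finset.univ.image (fun b => -(y b)))) ?_ ?_
  · rw [hcard]
    have hnd : ((∏ b, (X - C (y b)) : ℂ[X]) -
        ∑ b, C (Lag y b) * ((X - C (y b)) * ∏ k : Fin (2*n), (X + C (y (b.succAbove k))))).natDegree
          ≤ 2*n+1 := by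
      refine (natDegree_sub_le _ _).trans (max_le ?_ ?_)
      · rw [natDegree_prod_of_monic _ _ fun b _ => monic_X_sub_C (y b)]
        simp [natDegree_X_sub_C]
      · refine natDegree_sum_le_of_forall_le _ _ fun b _ => ?_
        refine (natDegree_C_mul_le _ _).trans (natDegree_mul_le.trans ?_)
        have h1 : (X - C (y b)).natDegree ≤ 1 := natDegree_X_sub_C_le (y b)
        have h2 : (∏ k : Fin (2*n), (X + C (y (b.succAbove k)))).natDegree ≤ 2*n := by
          refine (natDegree_prod_le _ _).trans ?_
          simp [natDegree_X_add_C]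
        omega
    refine lt_of_le_of_lt degree_le_natDegree ?_
    exact_mod_cast lt_of_le_of_lt (Nat.cast_le.mpr hnd)
      (by exact_mod_cast Nat.lt_succ_self (2*n+1))
  · intro x hx
    simp only [Finset.mem_insert, Finset.mem_image] at hx
    simp only [eval_sub, eval_finset_sum, eval_mul, eval_C, eval_X, eval_prod, eval_add]
    rcases hx with rfl | ⟨c, -, rfl⟩
    · have hterm : ∀ b : Fin (2*n+1),
          Lag y b * ((0 - y b) * ∏ k : Fin (2*n), (0 + y (b.succAbove k)))
            = Lag y b * (-(∏ b', y b')) := by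
        intro b
        have hb := Fin.prod_univ_succAbove y b
        simp only [zero_sub, zero_add]
        rw [hb]
        ring
      rw [Finset.sum_congr rfl (fun b _ => hterm b), ← Finset.sum_mul,
        sum_Lag_eq_one y hinj h0, prod_neg_odd y 0]
      simp
    · have hterm : ∀ b ∈ Finset.univ, b ≠ c →
          Lag y b * ((-(y c) - y b) * ∏ k : Fin (2*n), (-(y c) + y (b.succAbove k))) = 0 := by
        intro b _ hbc
        obtain ⟨k, hk⟩ := Fin.exists_succAbove_eq (Ne.symm hbc)
        refine mul_eq_zero_of_right _ (mul_eq_zero_of_right _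
          (Finset.prod_eq_zero (Finset.mem_univ k) ?_))
        rw [hk]; ring
      rw [Finset.sum_eq_single c hterm (by simp)]
      have hflip : (∏ k : Fin (2*n), (-(y c) + y (c.succAbove k)))
          = ∏ k : Fin (2*n), (y c - y (c.succAbove k)) := by
        rw [show (fun k : Fin (2*n) => -(y c) + y (c.succAbove k))
            = fun k => (-1:ℂ) * (y c - y (c.succAbove k)) by funext k; ring]
        rw [Finset.prod_mul_distrib, Finset.prod_const, Finset.card_univ, Fintype.card_fin,
          pow_mul, neg_one_sq, one_pow, one_mul]
      rw [hflip, show Lag y c * ((-(y c) - y c) * ∏ k : Fin (2*n), (y c - y (c.succAbove k)))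
          = (-(y c) - y c) * (Lag y c * ∏ k : Fin (2*n), (y c - y (c.succAbove k))) by ring,
        Lag_mul_prod y hinj c, prod_neg_odd y (-(y c)),
        Fin.prod_univ_succAbove (fun b => y b - -(y c)) c]
      ring

lemma key_rational (y : Fin (2*n+1) → ℂ) (hinj : Function.Injective y)
    (h0 : ∀ b, y b ≠ 0) (t : ℂ) (ht : ∀ b, t + y b ≠ 0) :
    ∑ b, ((t - y b)/(t + y b)) * Lag y b = ∏ b, ((t - y b)/(t + y b)) := by
  classical
  have hstar := congrArg (Polynomial.eval t) (star_poly y hinj h0)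
  simp only [eval_prod, eval_finset_sum, eval_mul, eval_sub, eval_add, eval_C, eval_X] at hstar
  have hprodall : (∏ b, (t + y b)) ≠ 0 := Finset.prod_ne_zero_iff.mpr fun b _ => ht b
  calc ∑ b, ((t - y b)/(t + y b)) * Lag y b
      = ∑ b, (Lag y b * ((t - y b) * ∏ k : Fin (2*n), (t + y (b.succAbove k))))
          / ∏ b, (t + y b) := by
        refine Finset.sum_congr rfl fun b _ => ?_
        rw [div_mul_eq_mul_div, div_eq_div_iff (ht b) hprodall,
          Fin.prod_univ_succAbove (fun b' => t + y b') b]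
        ring
    _ = (∑ b, Lag y b * ((t - y b) * ∏ k : Fin (2*n), (t + y (b.succAbove k))))
          / ∏ b, (t + y b) := by rw [Finset.sum_div]
    _ = (∏ b, (t - y b)) / ∏ b, (t + y b) := by rw [← hstar]
    _ = ∏ b, ((t - y b)/(t + y b)) := by rw [Finset.prod_div_distrib]

lemma Fsum_schur : ∀ (n : ℕ) (z : Fin (2*n) → ℂ), (∀ i j, z i + z j ≠ 0) →
    Function.Injective z →
    Fsum n (fun i j => (z i - z j)/(z i + z j))
      = 2^n * (Nat.factorial n : ℂ) * ∏ i, ∏ j ∈ Finset.Ioi i, (z i - z j)/(z i + z j) := by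
  intro n
  induction n with
  | zero =>
    intro z hz hinj
    haveI : IsEmpty (Fin (2*0)) := by simp only [Nat.mul_zero]; infer_instance
    rw [Fsum]
    rw [Fintype.sum_subsingleton _ (1 : Perm (Fin (2*0)))]
    simp
  | succ n ih =>
    intro z hz hinj
    have hz0 : ∀ i : Fin (2*n+2), z i ≠ 0 := by
      intro i h
      exact hz i i (by rw [h, add_zero])
    have hskew : ∀ i j : Fin (2*n+2), (z j - z i)/(z j + z i) = -((z i - z j)/(z i + z j)) := by
      intro i j
      rw [add_comm (z j) (z i), ← neg_div, neg_sub]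
    show Fsum (n+1) (fun i j : Fin (2*n+2) => (z i - z j)/(z i + z j))
      = 2^(n+1) * ((Nat.factorial (n+1) : ℕ) : ℂ) *
        ∏ i : Fin (2*n+2), ∏ j ∈ Finset.Ioi i, (z i - z j)/(z i + z j)
    rw [expand n (fun i j : Fin (2*n+2) => (z i - z j)/(z i + z j))]
    have hmain : ∀ p : Fin (2*n+2),
        (∑ b : Fin (2*n+1), (-1:ℂ)^(p.val+b.val) *
          ((z p - z (p.succAbove b))/(z p + z (p.succAbove b))) *
          Fsum n (fun k l =>
            (z (p.succAbove (b.succAbove k)) - z (p.succAbove (b.succAbove l))) /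
            (z (p.succAbove (b.succAbove k)) + z (p.succAbove (b.succAbove l)))))
        = 2^n * (Nat.factorial n : ℂ) *
            ∏ i : Fin (2*n+2), ∏ j ∈ Finset.Ioi i, (z i - z j)/(z i + z j) := by
      intro p
      have hyinj : Function.Injective (fun k : Fin (2*n+1) => z (p.succAbove k)) :=
        fun a b h => p.succAbove_right_injective (hinj h)
      have hy0 : ∀ b : Fin (2*n+1), z (p.succAbove b) ≠ 0 := fun b => hz0 _
      -- row split at p
      have hrowp := row_split (2*n+1) (fun i j : Fin (2*n+2) => (z i - z j)/(z i + z j))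
        hskew p
      -- row split at b for the y-level
      have hrowb : ∀ b : Fin (2*n+1),
          (∏ k : Fin (2*n+1), ∏ l ∈ Finset.Ioi k,
            (z (p.succAbove k) - z (p.succAbove l))/(z (p.succAbove k) + z (p.succAbove l)))
          = ((-1:ℂ)^b.val * ∏ k : Fin (2*n),
              (z (p.succAbove b) - z (p.succAbove (b.succAbove k))) /
              (z (p.succAbove b) + z (p.succAbove (b.succAbove k)))) *
            ∏ k : Fin (2*n), ∏ l ∈ Finset.Ioi k,
              (z (p.succAbove (b.succAbove k)) - z (p.succAbove (b.succAbove l))) /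
              (z (p.succAbove (b.succAbove k)) + z (p.succAbove (b.succAbove l))) := by
        intro b
        exact row_split (2*n)
          (fun i j : Fin (2*n+1) =>
            (z (p.succAbove i) - z (p.succAbove j))/(z (p.succAbove i) + z (p.succAbove j)))
          (fun i j => by
            show (z (p.succAbove j) - z (p.succAbove i))/(z (p.succAbove j) + z (p.succAbove i))
              = -((z (p.succAbove i) - z (p.succAbove j))/(z (p.succAbove i) + z (p.succAbove j)))
            rw [add_comm (z (p.succAbove j)) (z (p.succAbove i)), ← neg_div, neg_sub]) b
      have hLagR : ∀ b : Fin (2*n+1),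
          Lag (fun k => z (p.succAbove k)) b *
            ∏ k : Fin (2*n),
              (z (p.succAbove b) - z (p.succAbove (b.succAbove k))) /
              (z (p.succAbove b) + z (p.succAbove (b.succAbove k))) = 1 := by
        intro b
        rw [Lag, ← Finset.prod_mul_distrib]
        refine Finset.prod_eq_one fun k _ => ?_
        have hnum : z (p.succAbove b) - z (p.succAbove (b.succAbove k)) ≠ 0 := by
          rw [sub_ne_zero]
          intro h
          exact Fin.succAbove_ne b k (hyinj h).symm
        have hden : z (p.succAbove b) + z (p.succAbove (b.succAbove k)) ≠ 0 := hz _ _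
        field_simp
      have hIH : ∀ b : Fin (2*n+1),
          Fsum n (fun k l =>
            (z (p.succAbove (b.succAbove k)) - z (p.succAbove (b.succAbove l))) /
            (z (p.succAbove (b.succAbove k)) + z (p.succAbove (b.succAbove l))))
          = 2^n * (Nat.factorial n : ℂ) *
              ∏ k : Fin (2*n), ∏ l ∈ Finset.Ioi k,
                (z (p.succAbove (b.succAbove k)) - z (p.succAbove (b.succAbove l))) /
                (z (p.succAbove (b.succAbove k)) + z (p.succAbove (b.succAbove l))) := by
        intro b
        exact ih (fun k => z (p.succAbove (b.succAbove k))) (fun i j => hz _ _)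
          (fun a c h => b.succAbove_right_injective (p.succAbove_right_injective (hinj h)))
      have hsq : ∀ (v : ℕ), (-1:ℂ)^v * (-1:ℂ)^v = 1 := by
        intro v
        rw [← pow_add, ← two_mul, pow_mul]
        norm_num
      have hterm : ∀ b : Fin (2*n+1),
          (-1:ℂ)^(p.val+b.val) *
            ((z p - z (p.succAbove b))/(z p + z (p.succAbove b))) *
            (2^n * (Nat.factorial n : ℂ) *
              ∏ k : Fin (2*n), ∏ l ∈ Finset.Ioi k,
                (z (p.succAbove (b.succAbove k)) - z (p.succAbove (b.succAbove l))) /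
                (z (p.succAbove (b.succAbove k)) + z (p.succAbove (b.succAbove l))))
          = (-1:ℂ)^p.val * (2^n * (Nat.factorial n : ℂ)) *
              (((z p - z (p.succAbove b))/(z p + z (p.succAbove b))) *
                Lag (fun k => z (p.succAbove k)) b *
                ∏ k : Fin (2*n+1), ∏ l ∈ Finset.Ioi k,
                  (z (p.succAbove k) - z (p.succAbove l))/(z (p.succAbove k) + z (p.succAbove l))) := by
        intro b
        have hQ : (∏ k : Fin (2*n), ∏ l ∈ Finset.Ioi k,
              (z (p.succAbove (b.succAbove k)) - z (p.succAbove (b.succAbove l))) /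
              (z (p.succAbove (b.succAbove k)) + z (p.succAbove (b.succAbove l))))
            = (-1:ℂ)^b.val * (Lag (fun k => z (p.succAbove k)) b *
                ∏ k : Fin (2*n+1), ∏ l ∈ Finset.Ioi k,
                  (z (p.succAbove k) - z (p.succAbove l))/(z (p.succAbove k) + z (p.succAbove l))) := by
          have h2 := hrowb b
          have h3 := hLagR b
          have h4 := hsq b.val
          linear_combination (-(((-1:ℂ)^b.val) * Lag (fun k => z (p.succAbove k)) b)) * h2
            + (-(∏ k : Fin (2*n), ∏ l ∈ Finset.Ioi k,
              (z (p.succAbove (b.succAbove k)) - z (p.succAbove (b.succAbove l))) /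
              (z (p.succAbove (b.succAbove k)) + z (p.succAbove (b.succAbove l))))) * h3
            + (-(Lag (fun k => z (p.succAbove k)) b *
                (∏ k : Fin (2*n),
                  (z (p.succAbove b) - z (p.succAbove (b.succAbove k))) /
                  (z (p.succAbove b) + z (p.succAbove (b.succAbove k)))) *
                (∏ k : Fin (2*n), ∏ l ∈ Finset.Ioi k,
              (z (p.succAbove (b.succAbove k)) - z (p.succAbove (b.succAbove l))) /
              (z (p.succAbove (b.succAbove k)) + z (p.succAbove (b.succAbove l)))))) * h4
        rw [hQ, pow_add]
        have h4 := hsq b.val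
        linear_combination ((-1:ℂ)^p.val *
          ((z p - z (p.succAbove b))/(z p + z (p.succAbove b))) *
          (2^n * (Nat.factorial n : ℂ)) *
          Lag (fun k => z (p.succAbove k)) b *
          (∏ k : Fin (2*n+1), ∏ l ∈ Finset.Ioi k,
            (z (p.succAbove k) - z (p.succAbove l))/(z (p.succAbove k) + z (p.succAbove l)))) * h4
      calc (∑ b : Fin (2*n+1), (-1:ℂ)^(p.val+b.val) *
          ((z p - z (p.succAbove b))/(z p + z (p.succAbove b))) *
          Fsum n (fun k l =>
            (z (p.succAbove (b.succAbove k)) - z (p.succAbove (b.succAbove l))) /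
            (z (p.succAbove (b.succAbove k)) + z (p.succAbove (b.succAbove l)))))
          = ∑ b : Fin (2*n+1), (-1:ℂ)^p.val * (2^n * (Nat.factorial n : ℂ)) *
              (((z p - z (p.succAbove b))/(z p + z (p.succAbove b))) *
                Lag (fun k => z (p.succAbove k)) b *
                ∏ k : Fin (2*n+1), ∏ l ∈ Finset.Ioi k,
                  (z (p.succAbove k) - z (p.succAbove l))/(z (p.succAbove k) + z (p.succAbove l))) := by
            refine Finset.sum_congr rfl fun b _ => ?_
            rw [hIH b]
            exact hterm b
        _ = (-1:ℂ)^p.val * (2^n * (Nat.factorial n : ℂ)) *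
              ((∑ b : Fin (2*n+1), ((z p - z (p.succAbove b))/(z p + z (p.succAbove b))) *
                Lag (fun k => z (p.succAbove k)) b) *
                ∏ k : Fin (2*n+1), ∏ l ∈ Finset.Ioi k,
                  (z (p.succAbove k) - z (p.succAbove l))/(z (p.succAbove k) + z (p.succAbove l))) := by
            have hb : ∀ b : Fin (2*n+1), (-1:ℂ)^p.val * (2^n * (Nat.factorial n : ℂ)) *
                (((z p - z (p.succAbove b))/(z p + z (p.succAbove b))) *
                  Lag (fun k => z (p.succAbove k)) b *
                  ∏ k : Fin (2*n+1), ∏ l ∈ Finset.Ioi k,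
                    (z (p.succAbove k) - z (p.succAbove l))/(z (p.succAbove k) + z (p.succAbove l)))
              = (((z p - z (p.succAbove b))/(z p + z (p.succAbove b))) *
                  Lag (fun k => z (p.succAbove k)) b) *
                ((-1:ℂ)^p.val * (2^n * (Nat.factorial n : ℂ)) *
                  ∏ k : Fin (2*n+1), ∏ l ∈ Finset.Ioi k,
                    (z (p.succAbove k) - z (p.succAbove l))/(z (p.succAbove k) + z (p.succAbove l))) :=
              fun b => by ring
            rw [Finset.sum_congr rfl (fun b _ => hb b), ← Finset.sum_mul]
            ring
        _ = (-1:ℂ)^p.val * (2^n * (Nat.factorial n : ℂ)) *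
              ((∏ b : Fin (2*n+1), ((z p - z (p.succAbove b))/(z p + z (p.succAbove b)))) *
                ∏ k : Fin (2*n+1), ∏ l ∈ Finset.Ioi k,
                  (z (p.succAbove k) - z (p.succAbove l))/(z (p.succAbove k) + z (p.succAbove l))) := by
            rw [key_rational (fun k => z (p.succAbove k)) hyinj hy0 (z p) (fun b => hz _ _)]
        _ = 2^n * (Nat.factorial n : ℂ) *
              ∏ i : Fin (2*n+2), ∏ j ∈ Finset.Ioi i, (z i - z j)/(z i + z j) := by
            rw [hrowp]
            ring
    rw [Finset.sum_congr rfl (fun p _ => hmain p), Finset.sum_const, Finset.card_univ,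
      Fintype.card_fin, nsmul_eq_mul]
    rw [Nat.factorial_succ]
    push_cast
    ring

lemma contAt_finset_prod {ι : Type*} (s : Finset ι) (f : ι → ℂ → ℂ) (x : ℂ)
    (h : ∀ i ∈ s, ContinuousAt (f i) x) :
    ContinuousAt (fun τ => ∏ i ∈ s, f i τ) x := by
  classical
  induction s using Finset.cons_induction with
  | empty => simpa using continuousAt_const
  | cons a s ha ih =>
    simp only [Finset.prod_cons]
    exact (h a (Finset.mem_cons_self a s)).mul
      (ih fun i hi => h i (Finset.mem_cons_of_mem hi))

lemma contAt_finset_sum {ι : Type*} (s : Finset ι) (f : ι → ℂ → ℂ) (x : ℂ)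
    (h : ∀ i ∈ s, ContinuousAt (f i) x) :
    ContinuousAt (fun τ => ∑ i ∈ s, f i τ) x := by
  classical
  induction s using Finset.cons_induction with
  | empty => simpa using continuousAt_const
  | cons a s ha ih =>
    simp only [Finset.sum_cons]
    exact (h a (Finset.mem_cons_self a s)).add
      (ih fun i hi => h i (Finset.mem_cons_of_mem hi))

lemma Fsum_schur_all (n : ℕ) (z : Fin (2*n) → ℂ) (hz : ∀ i j, z i + z j ≠ 0) :
    Fsum n (fun i j => (z i - z j)/(z i + z j))
      = 2^n * (Nat.factorial n : ℂ) * ∏ i, ∏ j ∈ Finset.Ioi i, (z i - z j)/(z i + z j) := by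
  classical
  set v : Fin (2*n) → ℂ := fun i => ((i.val + 1 : ℕ) : ℂ) with hv
  have hvne : ∀ i j : Fin (2*n), i ≠ j → v i - v j ≠ 0 := by
    intro i j hij h
    rw [sub_eq_zero, hv] at h
    exact hij (Fin.ext (by exact_mod_cast Nat.succ_injective (Nat.cast_injective h)))
  have hvpos : ∀ i j : Fin (2*n), v i + v j ≠ 0 := by
    intro i j h
    rw [hv] at h
    have : ((i.val + 1 + (j.val + 1) : ℕ) : ℂ) = 0 := by push_cast; push_cast at h; linear_combination h
    exact Nat.cast_ne_zero.mpr (by omega) this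
  set w : ℂ → Fin (2*n) → ℂ := fun τ i => z i + τ * v i with hw
  set T : Finset ℂ := insert 0
    ((Finset.univ.offDiag.image (fun q : Fin (2*n) × Fin (2*n) => (z q.2 - z q.1)/(v q.1 - v q.2)))
      ∪ ((Finset.univ ×ˢ Finset.univ).image
          (fun q : Fin (2*n) × Fin (2*n) => -(z q.1 + z q.2)/(v q.1 + v q.2)))) with hT
  have hgood : ∀ τ : ℂ, τ ∉ T → (∀ i j, w τ i + w τ j ≠ 0) ∧ Function.Injective (w τ) := by
    intro τ hτ
    constructor
    · intro i j h
      apply hτ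
      rw [hT]
      refine Finset.mem_insert_of_mem (Finset.mem_union_right _ ?_)
      refine Finset.mem_image.mpr ⟨(i, j), by simp, ?_⟩
      show -(z i + z j)/(v i + v j) = τ
      rw [div_eq_iff (hvpos i j)]
      simp only [hw] at h
      linear_combination -h
    · intro i j h
      by_contra hij
      apply hτ
      rw [hT]
      refine Finset.mem_insert_of_mem (Finset.mem_union_left _ ?_)
      refine Finset.mem_image.mpr ⟨(i, j), Finset.mem_offDiag.mpr ⟨Finset.mem_univ _, Finset.mem_univ _, hij⟩, ?_⟩
      show (z j - z i)/(v i - v j) = τ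
      rw [div_eq_iff (hvne i j hij)]
      simp only [hw] at h
      linear_combination -h
  set Φ : ℂ → ℂ := fun τ =>
    Fsum n (fun i j => (w τ i - w τ j)/(w τ i + w τ j))
      - 2^n * (Nat.factorial n : ℂ) * ∏ i, ∏ j ∈ Finset.Ioi i, (w τ i - w τ j)/(w τ i + w τ j)
    with hΦ
  have hΦ0 : ∀ τ ∉ T, Φ τ = 0 := by
    intro τ hτ
    obtain ⟨h1, h2⟩ := hgood τ hτ
    rw [hΦ]
    simp only
    rw [Fsum_schur n (w τ) h1 h2, sub_self]
  -- continuity of Φ at 0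
  have hwc : ∀ i : Fin (2*n), ContinuousAt (fun τ => w τ i) 0 := by
    intro i
    rw [hw]
    exact continuousAt_const.add (continuousAt_id.mul continuousAt_const)
  have hw0 : ∀ i, w 0 i = z i := by intro i; rw [hw]; simp
  have hentry : ∀ i j : Fin (2*n),
      ContinuousAt (fun τ => (w τ i - w τ j)/(w τ i + w τ j)) 0 := by
    intro i j
    refine ((hwc i).sub (hwc j)).div ((hwc i).add (hwc j)) ?_
    rw [hw0, hw0]
    exact hz i j
  have hΦc : ContinuousAt Φ 0 := by
    rw [hΦ]
    refine ContinuousAt.sub ?_ (continuousAt_const.mul ?_)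
    · refine contAt_finset_sum _ _ _ fun σ _ => continuousAt_const.mul ?_
      exact contAt_finset_prod _ _ _ fun i _ => hentry _ _
    · exact contAt_finset_prod _ _ _ fun i _ =>
        contAt_finset_prod _ _ _ fun j _ => hentry _ _
  -- a sequence avoiding T tending to 0
  have hδ : ∃ δ : ℝ, 0 < δ ∧ ∀ t ∈ T, t ≠ 0 → δ < ‖t‖ := by
    by_cases hne : (T.erase 0).Nonempty
    · set R := ((T.erase 0).image (fun t => ‖t‖)).min' (hne.image _) with hR
      have hRpos : 0 < R := by
        obtain ⟨t, ht, hteq⟩ := Finset.mem_image.mp (((T.erase 0).image (fun t => ‖t‖)).min'_mem (hne.image _))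
        rw [hR, ← hteq]
        exact norm_pos_iff.mpr (Finset.ne_of_mem_erase ht)
      refine ⟨R/2, by linarith, ?_⟩
      intro t ht ht0
      have : R ≤ ‖t‖ := Finset.min'_le _ _ (Finset.mem_image_of_mem _ (Finset.mem_erase.mpr ⟨ht0, ht⟩))
      linarith
    · exact ⟨1, one_pos, fun t ht ht0 => absurd (Finset.mem_erase.mpr ⟨ht0, ht⟩)
        (fun h => hne ⟨t, h⟩)⟩
  obtain ⟨δ, hδpos, hδlt⟩ := hδ
  set u : ℕ → ℂ := fun k => ((δ / (k+1) : ℝ) : ℂ) with hu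
  have hupos : ∀ k : ℕ, (0:ℝ) < δ / (k+1) := by
    intro k
    positivity
  have huT : ∀ k, u k ∉ T := by
    intro k hk
    have hne0 : u k ≠ 0 := by
      rw [hu]
      simp only [ne_eq, Complex.ofReal_eq_zero]
      exact ne_of_gt (hupos k)
    have := hδlt (u k) hk hne0
    rw [hu] at this
    rw [Complex.norm_real] at this
    rw [Real.norm_eq_abs, abs_of_pos (hupos k)] at this
    have hle : δ / (k+1) ≤ δ := by
      rw [div_le_iff₀ (by positivity)]
      nlinarith
    linarith
  have hutend : Filter.Tendsto u Filter.atTop (nhds 0) := by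
    rw [hu]
    have h1 : Filter.Tendsto (fun k : ℕ => δ / (k+1) : ℕ → ℝ) Filter.atTop (nhds 0) := by
      have := tendsto_const_div_atTop_nhds_zero_nat δ
      have h2 : Filter.Tendsto (fun k : ℕ => (k+1 : ℕ)) Filter.atTop Filter.atTop :=
        Filter.tendsto_add_atTop_nat 1
      have h3 := this.comp h2
      refine h3.congr fun k => ?_
      simp only [Function.comp]
      push_cast
      ring
    have := Complex.continuous_ofReal.continuousAt (x := (0:ℝ))
    have h4 := (Complex.continuous_ofReal.tendsto 0).comp h1
    have h5 : Filter.Tendsto (fun k : ℕ => ((δ / (k+1) : ℝ) : ℂ)) Filter.atTop (nhds ((0:ℝ):ℂ)) := by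
      refine h4.congr fun k => rfl
    simpa using h5
  have hΦu : Filter.Tendsto (Φ ∘ u) Filter.atTop (nhds (Φ 0)) :=
    (hΦc.tendsto).comp hutend
  have hΦu0 : Filter.Tendsto (Φ ∘ u) Filter.atTop (nhds 0) := by
    have : Φ ∘ u = fun _ => 0 := funext fun k => hΦ0 (u k) (huT k)
    rw [this]
    exact tendsto_const_nhds
  have hΦzero : Φ 0 = 0 := tendsto_nhds_unique hΦu hΦu0
  rw [hΦ] at hΦzero
  simp only at hΦzero
  have hfun : (fun i j => (w 0 i - w 0 j)/(w 0 i + w 0 j))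
      = fun i j => (z i - z j)/(z i + z j) := by
    funext i j
    rw [hw0, hw0]
  rw [hfun] at hΦzero
  simp only [hw0] at hΦzero
  linear_combination hΦzero


end
end PfaffianCayleyAux

open PfaffianCayleyAux in
/-- For an even-dimensional skew-symmetric matrix with entries
`(z i - z j)/(z i + z j)`, the Pfaffian equals the product over `i < j` of
`(z i - z j)/(z i + z j)`. -/
theorem pfaffian_cayley_product (n : ℕ) (hn : 0 < n) (z : Fin (2 * n) → ℂ)
    (hz : ∀ i j, z i + z j ≠ 0) :
    pfaffian (Matrix.of fun i j => (z i - z j) / (z i + z j)) =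
      ∏ i : Fin (2 * n), ∏ j ∈ Finset.Ioi i, (z i - z j) / (z i + z j) := by
  have h := Fsum_schur_all n z hz
  have hc : ((2:ℂ)^n * (Nat.factorial n : ℂ)) ≠ 0 :=
    mul_ne_zero (pow_ne_zero _ two_ne_zero) (Nat.cast_ne_zero.mpr (Nat.factorial_ne_zero n))
  show (1 / ((2:ℂ)^n * (Nat.factorial n : ℂ))) *
      Fsum n (fun i j => (z i - z j)/(z i + z j)) = _
  rw [h]
  field_simp
  exact mul_div_cancel_left₀ _ (Nat.cast_ne_zero.mpr (Nat.factorial_ne_zero n))
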